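/- Let X, Y be real Hilbert spaces, f : X → ℝ and c : X → Y be C² near 0, and p ∈ Y* a continuous linear functional. Define Lagrangians L₁(x) := f(x) + p(c(x)) and L₂(x) := f(Φ(x)) + p(Ψ(c(Φ(x)))), where Φ : U → X and Ψ : V → Y are C² with Φ(0)=0, Φ'(0)=id, Ψ(0)=0, Ψ'(0)=id, and c(0)=0. Then for all v,w ∈ X: L₂''(0)(v,w) − L₁''(0)(v,w) = L₁'(0)(Φ''(0)(v,w)) + p(Ψ''(0)(c'(0)v, c'(0)w)). -/

import Mathlib

open Filter Topology ContinuousLinearMap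

/-- Second derivative of a composition at a point. -/
lemma D2_comp
    {X Y Z : Type*} [NormedAddCommGroup X] [NormedSpace ℝ X]
    [NormedAddCommGroup Y] [NormedSpace ℝ Y]
    [NormedAddCommGroup Z] [NormedSpace ℝ Z]
    (g : Y → Z) (h : X → Y) (x : X)
    (hg : ContDiffAt ℝ 2 g (h x)) (hh : ContDiffAt ℝ 2 h x) (v w : X) :
    fderiv ℝ (fderiv ℝ (fun y => g (h y))) x v w =
      fderiv ℝ (fderiv ℝ g) (h x) (fderiv ℝ h x v) (fderiv ℝ h x w)
        + fderiv ℝ g (h x) (fderiv ℝ (fderiv ℝ h) x v w) := by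
  have hhc : ContinuousAt h x := hh.continuousAt
  have hgev : ∀ᶠ y in 𝓝 x, ContDiffAt ℝ 2 g (h y) :=
    hhc.tendsto.eventually (hg.eventually (by simp))
  have hhev : ∀ᶠ y in 𝓝 x, ContDiffAt ℝ 2 h y := hh.eventually (by simp)
  have hev : (fderiv ℝ (fun y => g (h y))) =ᶠ[𝓝 x]
      fun y => (fderiv ℝ g (h y)).comp (fderiv ℝ h y) := by
    filter_upwards [hgev, hhev] with y hgy hhy
    exact fderiv_comp y (hgy.differentiableAt two_ne_zero) (hhy.differentiableAt two_ne_zero)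
  have hB : DifferentiableAt ℝ (fun y => fderiv ℝ g (h y)) x := by
    have h1 : DifferentiableAt ℝ (fderiv ℝ g) (h x) :=
      (hg.fderiv_right (m := 1) (by norm_num) |>.differentiableAt one_ne_zero)
    exact h1.comp x (hh.differentiableAt two_ne_zero)
  have hC : DifferentiableAt ℝ (fderiv ℝ h) x :=
    (hh.fderiv_right (m := 1) (by norm_num)).differentiableAt one_ne_zero
  have hBf : fderiv ℝ (fun y => fderiv ℝ g (h y)) x =
      (fderiv ℝ (fderiv ℝ g) (h x)).comp (fderiv ℝ h x) := by
    have h1 : DifferentiableAt ℝ (fderiv ℝ g) (h x) :=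
      (hg.fderiv_right (m := 1) (by norm_num)).differentiableAt one_ne_zero
    exact fderiv_comp x h1 (hh.differentiableAt two_ne_zero)
  rw [hev.fderiv_eq, fderiv_clm_comp hB hC]
  simp [hBf]
  abel

/-- Second derivative of a sum at a point. -/
lemma D2_add
    {X Z : Type*} [NormedAddCommGroup X] [NormedSpace ℝ X]
    [NormedAddCommGroup Z] [NormedSpace ℝ Z]
    (f g : X → Z) (x : X)
    (hf : ContDiffAt ℝ 2 f x) (hg : ContDiffAt ℝ 2 g x) (v w : X) :
    fderiv ℝ (fderiv ℝ (fun y => f y + g y)) x v w =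
      fderiv ℝ (fderiv ℝ f) x v w + fderiv ℝ (fderiv ℝ g) x v w := by
  have hev : (fderiv ℝ (fun y => f y + g y)) =ᶠ[𝓝 x]
      fun y => fderiv ℝ f y + fderiv ℝ g y := by
    filter_upwards [hf.eventually (by simp), hg.eventually (by simp)] with y hfy hgy
    exact fderiv_fun_add (hfy.differentiableAt two_ne_zero) (hgy.differentiableAt two_ne_zero)
  have hF : DifferentiableAt ℝ (fderiv ℝ f) x :=
    (hf.fderiv_right (m := 1) (by norm_num)).differentiableAt one_ne_zero
  have hG : DifferentiableAt ℝ (fderiv ℝ g) x :=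
    (hg.fderiv_right (m := 1) (by norm_num)).differentiableAt one_ne_zero
  rw [hev.fderiv_eq, fderiv_fun_add hF hG]
  simp

lemma D2_clm {Y Z : Type*} [NormedAddCommGroup Y] [NormedSpace ℝ Y]
    [NormedAddCommGroup Z] [NormedSpace ℝ Z] (p : Y →L[ℝ] Z) (y : Y) :
    fderiv ℝ (fderiv ℝ (⇑p)) y = 0 := by
  have : fderiv ℝ (⇑p) = fun _ => (p : Y →L[ℝ] Z) := funext fun z => p.fderiv
  rw [this]
  exact fderiv_const_apply p

theorem stmt3
    {X : Type*} [NormedAddCommGroup X] [InnerProductSpace ℝ X] [CompleteSpace X]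
    {Y : Type*} [NormedAddCommGroup Y] [InnerProductSpace ℝ Y] [CompleteSpace Y]
    (Φ : X → X) (Ψ : Y → Y) (f : X → ℝ) (c : X → Y) (p : Y →L[ℝ] ℝ)
    (hΦ : ContDiffAt ℝ 2 Φ 0) (hΦ0 : Φ 0 = 0)
    (hΦ' : fderiv ℝ Φ 0 = ContinuousLinearMap.id ℝ X)
    (hΨ : ContDiffAt ℝ 2 Ψ 0) (hΨ0 : Ψ 0 = 0)
    (hΨ' : fderiv ℝ Ψ 0 = ContinuousLinearMap.id ℝ Y)
    (hf : ContDiffAt ℝ 2 f 0)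
    (hc : ContDiffAt ℝ 2 c 0) (hc0 : c 0 = 0)
    (L₁ L₂ : X → ℝ)
    (hL₁ : L₁ = fun x => f x + p (c x))
    (hL₂ : L₂ = fun x => f (Φ x) + p (Ψ (c (Φ x)))) :
    ∀ v w : X,
      fderiv ℝ (fderiv ℝ L₂) 0 v w - fderiv ℝ (fderiv ℝ L₁) 0 v w =
        fderiv ℝ L₁ 0 (fderiv ℝ (fderiv ℝ Φ) 0 v w) +
          p (fderiv ℝ (fderiv ℝ Ψ) 0 (fderiv ℝ c 0 v) (fderiv ℝ c 0 w)) := by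
  intro v w
  subst hL₁ hL₂
  have h2 : (2:WithTop ℕ∞) ≠ 0 := two_ne_zero
  have hΨc0 : ContDiffAt ℝ 2 Ψ (c 0) := by rw [hc0]; exact hΨ
  have hpc : ContDiffAt ℝ 2 (fun x => p (c x)) 0 := p.contDiff.contDiffAt.comp 0 hc
  have hG : ContDiffAt ℝ 2 (fun x => Ψ (c x)) 0 := ContDiffAt.comp 0 hΨc0 hc
  have hpG : ContDiffAt ℝ 2 (fun x => p (Ψ (c x))) 0 := p.contDiff.contDiffAt.comp 0 hG
  have hF : ContDiffAt ℝ 2 (fun x => f x + p (Ψ (c x))) 0 := hf.add hpG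
  have hFΦ : ContDiffAt ℝ 2 (fun x => f x + p (Ψ (c x))) (Φ 0) := by rw [hΦ0]; exact hF
  -- first derivatives
  have efc : fderiv ℝ (fun x => p (c x)) 0 = p.comp (fderiv ℝ c 0) := by
    have := fderiv_comp (𝕜 := ℝ) 0 p.differentiableAt (hc.differentiableAt h2)
    simpa [Function.comp_def] using this
  have eG' : fderiv ℝ (fun x => Ψ (c x)) 0 = fderiv ℝ c 0 := by
    have := fderiv_comp (𝕜 := ℝ) 0 (hΨc0.differentiableAt h2) (hc.differentiableAt h2)
    rw [hc0, hΨ'] at this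
    simpa [Function.comp_def] using this
  have epG : fderiv ℝ (fun x => p (Ψ (c x))) 0 = p.comp (fderiv ℝ c 0) := by
    have := fderiv_comp (𝕜 := ℝ) 0 p.differentiableAt (hG.differentiableAt h2)
    rw [eG'] at this
    simpa [Function.comp_def] using this
  have eL1 : fderiv ℝ (fun x => f x + p (c x)) 0 = fderiv ℝ f 0 + p.comp (fderiv ℝ c 0) := by
    rw [fderiv_fun_add (hf.differentiableAt h2) (hpc.differentiableAt h2), efc]
  have eF : fderiv ℝ (fun x => f x + p (Ψ (c x))) 0 = fderiv ℝ f 0 + p.comp (fderiv ℝ c 0) := by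
    rw [fderiv_fun_add (hf.differentiableAt h2) (hpG.differentiableAt h2), epG]
  -- second derivatives
  have d2pc : fderiv ℝ (fderiv ℝ (fun x => p (c x))) 0 v w
      = p (fderiv ℝ (fderiv ℝ c) 0 v w) := by
    have e := D2_comp (⇑p) c 0 p.contDiff.contDiffAt hc v w
    rw [e, D2_clm]
    simp
  have d2G : fderiv ℝ (fderiv ℝ (fun x => Ψ (c x))) 0 v w =
      fderiv ℝ (fderiv ℝ Ψ) 0 (fderiv ℝ c 0 v) (fderiv ℝ c 0 w)
        + fderiv ℝ (fderiv ℝ c) 0 v w := by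
    have e := D2_comp Ψ c 0 hΨc0 hc v w
    rw [hc0, hΨ'] at e
    simpa using e
  have d2pG : fderiv ℝ (fderiv ℝ (fun x => p (Ψ (c x)))) 0 v w =
      p (fderiv ℝ (fderiv ℝ Ψ) 0 (fderiv ℝ c 0 v) (fderiv ℝ c 0 w))
        + p (fderiv ℝ (fderiv ℝ c) 0 v w) := by
    have e := D2_comp (⇑p) (fun x => Ψ (c x)) 0 p.contDiff.contDiffAt hG v w
    rw [e, D2_clm]
    simp [d2G, map_add]
  have d2L1 : fderiv ℝ (fderiv ℝ (fun x => f x + p (c x))) 0 v w =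
      fderiv ℝ (fderiv ℝ f) 0 v w + p (fderiv ℝ (fderiv ℝ c) 0 v w) := by
    rw [D2_add f (fun x => p (c x)) 0 hf hpc v w, d2pc]
  have d2F : fderiv ℝ (fderiv ℝ (fun x => f x + p (Ψ (c x)))) 0 v w =
      fderiv ℝ (fderiv ℝ f) 0 v w
        + (p (fderiv ℝ (fderiv ℝ Ψ) 0 (fderiv ℝ c 0 v) (fderiv ℝ c 0 w))
          + p (fderiv ℝ (fderiv ℝ c) 0 v w)) := by
    rw [D2_add f (fun x => p (Ψ (c x))) 0 hf hpG v w, d2pG]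
  have d2L2 : fderiv ℝ (fderiv ℝ (fun x => f (Φ x) + p (Ψ (c (Φ x))))) 0 v w =
      fderiv ℝ (fderiv ℝ (fun x => f x + p (Ψ (c x)))) 0 v w
        + fderiv ℝ (fun x => f x + p (Ψ (c x))) 0 (fderiv ℝ (fderiv ℝ Φ) 0 v w) := by
    have e := D2_comp (fun x => f x + p (Ψ (c x))) Φ 0 hFΦ hΦ v w
    rw [hΦ0, hΦ'] at e
    simpa using e
  rw [d2L2, d2F, d2L1, eF, eL1]
  ring
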